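/- Let a, b be integers and f(x) = (x - a)(x - b). If n is an odd composite with gcd(n, 2·f(0)·disc(f)) = 1 and f(x) divides x^n - x in (ℤ/nℤ)[x], then a^{n-1} ≡ 1 (mod n) and b^{n-1} ≡ 1 (mod n). -/
import Mathlib


open Polynomial

theorem stmt_11 (a b : ℤ) (f : ℤ[X]) (hf : f = (X - C a) * (X - C b))
    (n : ℕ) (hodd : Odd n) (hn : 1 < n) (hcomp : ¬ n.Prime)
    (hcop : Int.gcd (n : ℤ) (2 * (a * b) * (a - b) ^ 2) = 1)
    (hdvd : f.map (Int.castRingHom (ZMod n)) ∣ (X ^ n - X)) :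
    (a : ZMod n) ^ (n - 1) = 1 ∧ (b : ZMod n) ^ (n - 1) = 1 := by
  have hcp : IsCoprime (n : ℤ) (2 * (a * b) * (a - b) ^ 2) :=
    Int.isCoprime_iff_gcd_eq_one.mpr hcop
  have key : ∀ c : ℤ, ((c : ℤ) ∣ 2 * (a * b) * (a - b) ^ 2) →
      IsRoot (f.map (Int.castRingHom (ZMod n))) (c : ZMod n) →
      (c : ZMod n) ^ (n - 1) = 1 := by
    intro c hcdvd hroot
    have hcpc : IsCoprime (n : ℤ) c := hcp.of_isCoprime_of_dvd_right hcdvd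
    have hu : IsUnit (c : ZMod n) := by
      have := hcpc.map (Int.castRingHom (ZMod n))
      simp only [map_natCast, ZMod.natCast_self, map_intCast] at this
      exact (isCoprime_zero_left).mp this
    obtain ⟨g, hg⟩ := hdvd
    have heval : (c : ZMod n) ^ n - (c : ZMod n) = 0 := by
      have := congrArg (Polynomial.eval (c : ZMod n)) hg
      simpa [hroot.eq_zero] using this
    have hpow : (c : ZMod n) ^ n = (c : ZMod n) := by
      have := sub_eq_zero.mp heval
      exact this
    have h1 : (c : ZMod n) ^ (n - 1) * (c : ZMod n) = 1 * (c : ZMod n) := by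
      rw [one_mul, ← pow_succ, Nat.sub_add_cancel (by omega)]
      exact hpow
    exact hu.mul_right_cancel h1
  constructor
  · refine key a ⟨2 * b * (a - b) ^ 2, by ring⟩ ?_
    simp [hf, Polynomial.IsRoot]
  · refine key b ⟨2 * a * (a - b) ^ 2, by ring⟩ ?_
    simp [hf, Polynomial.IsRoot]
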